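/- Let C(t) = C₀(E + α t AᵀΓ⁻¹A C₀)⁻¹ and define L(t) := (C(t)C₀⁻¹)^{−1/α} = S E(t)^{−1/α} S⁻¹ (using the diagonalization C₀AᵀΓ⁻¹A = S D S⁻¹ and E(t) = diag((1+αtμ_i)⁻¹)). If x(t) solves ẋ(t) = −C(t)AᵀΓ⁻¹(Ax(t) − y) with x(0) = x₀, then d/dt [L(t)x(t)] = (C(t)C₀⁻¹)^{1−1/α} C₀AᵀΓ⁻¹y, and consequently x(t) = (C(t)C₀⁻¹)^{1/α} x₀ + (C(t)C₀⁻¹)^{1/α} ∫₀ᵗ (C(s)C₀⁻¹)^{1−1/α} ds · C₀AᵀΓ⁻¹ y. -/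

import Mathlib

open Matrix

/-- Spectral power `(C(t)C₀⁻¹)^(-p) = S diag((1+αtμᵢ)^p) S⁻¹`, defined via the
shared diagonalization `C₀AᵀΓ⁻¹A = S diag(μ) S⁻¹`. -/
noncomputable def specPow {n : ℕ} (S : Matrix (Fin n) (Fin n) ℝ) (μ : Fin n → ℝ)
    (α p t : ℝ) : Matrix (Fin n) (Fin n) ℝ :=
  S * Matrix.diagonal (fun i => (1 + α * t * μ i) ^ (p : ℝ)) * S⁻¹

lemma sandwich_mul {n : ℕ} {S : Matrix (Fin n) (Fin n) ℝ} (hS : S⁻¹ * S = 1)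
    (f g : Fin n → ℝ) :
    (S * Matrix.diagonal f * S⁻¹) * (S * Matrix.diagonal g * S⁻¹)
      = S * Matrix.diagonal (fun i => f i * g i) * S⁻¹ := by
  have h : S * Matrix.diagonal f * S⁻¹ * (S * Matrix.diagonal g * S⁻¹)
      = S * (Matrix.diagonal f * (S⁻¹ * S) * Matrix.diagonal g) * S⁻¹ := by
    noncomm_ring
  rw [h, hS, Matrix.mul_one, Matrix.diagonal_mul_diagonal]

lemma sandwich_apply {n : ℕ} (S : Matrix (Fin n) (Fin n) ℝ) (f : Fin n → ℝ) (i j : Fin n) :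
    (S * Matrix.diagonal f * S⁻¹) i j = ∑ l, S i l * f l * S⁻¹ l j := by
  rw [Matrix.mul_apply]
  refine Finset.sum_congr rfl fun l _ => ?_
  rw [Matrix.mul_diagonal]

lemma specPow_mul_specPow {n : ℕ} {S : Matrix (Fin n) (Fin n) ℝ} (hS : S⁻¹ * S = 1)
    {μ : Fin n → ℝ} {α t : ℝ} (h : ∀ i, 0 < 1 + α * t * μ i) (p q : ℝ) :
    specPow S μ α p t * specPow S μ α q t = specPow S μ α (p + q) t := by
  unfold specPow
  rw [sandwich_mul hS]
  have h2 : (fun i => (1 + α * t * μ i) ^ (p:ℝ) * (1 + α * t * μ i) ^ (q:ℝ))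
      = fun i => (1 + α * t * μ i) ^ (p + q : ℝ) := by
    funext i; rw [← Real.rpow_add (h i)]
  rw [h2]

lemma specPow_zero {n : ℕ} {S : Matrix (Fin n) (Fin n) ℝ} (hS : S * S⁻¹ = 1)
    {μ : Fin n → ℝ} {α p : ℝ} : specPow S μ α p 0 = 1 := by
  unfold specPow
  have h : (fun i => (1 + α * 0 * μ i) ^ (p:ℝ)) = fun _ => (1:ℝ) := by
    funext i; simp
  rw [h, Matrix.diagonal_one, Matrix.mul_one, hS]

lemma specPow_exp_zero {n : ℕ} {S : Matrix (Fin n) (Fin n) ℝ} (hS : S * S⁻¹ = 1)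
    {μ : Fin n → ℝ} {α t : ℝ} : specPow S μ α 0 t = 1 := by
  unfold specPow
  have h : (fun i => (1 + α * t * μ i) ^ (0:ℝ)) = fun _ => (1:ℝ) := by
    funext i; simp
  rw [h, Matrix.diagonal_one, Matrix.mul_one, hS]

lemma hasDerivAt_base {α t c : ℝ} : HasDerivAt (fun s : ℝ => 1 + α * s * c) (α * c) t := by
  have h : HasDerivAt (fun s : ℝ => α * s * c) (α * c) t := by
    simpa using ((hasDerivAt_id t).const_mul α).mul_const c
  simpa using h.const_add 1

lemma hasDerivAt_entry {α t c p : ℝ} (h : 0 < 1 + α * t * c) :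
    HasDerivAt (fun s : ℝ => (1 + α * s * c) ^ (p:ℝ))
      (p * (1 + α * t * c) ^ (p - 1 : ℝ) * (α * c)) t := by
  have h1 := Real.hasDerivAt_rpow_const (x := 1 + α * t * c) (p := p) (Or.inl h.ne')
  exact h1.comp t hasDerivAt_base

theorem variation_of_constants {n m k : ℕ} (hk : k ≤ n) (α : ℝ) (hα : 1 ≤ α)
    (C₀ : Matrix (Fin n) (Fin n) ℝ) (hC₀ : C₀.PosDef)
    (A : Matrix (Fin m) (Fin n) ℝ)
    (Γ : Matrix (Fin m) (Fin m) ℝ) (hΓ : Γ.PosDef)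
    (y : Fin m → ℝ)
    (S : Matrix (Fin n) (Fin n) ℝ) (μ : Fin n → ℝ)
    (hS : IsUnit S.det)
    (hμpos : ∀ i : Fin n, (i : ℕ) < k → 0 < μ i)
    (hμzero : ∀ i : Fin n, k ≤ (i : ℕ) → μ i = 0)
    (hdiag : C₀ * Aᵀ * Γ⁻¹ * A = S * Matrix.diagonal μ * S⁻¹)
    (C : ℝ → Matrix (Fin n) (Fin n) ℝ)
    (hC : ∀ t : ℝ, C t = C₀ * (1 + (α * t) • (Aᵀ * Γ⁻¹ * A * C₀))⁻¹)
    (x₀ : Fin n → ℝ) (x : ℝ → Fin n → ℝ) (hx0 : x 0 = x₀)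
    (hx : ∀ t : ℝ, 0 ≤ t → ∀ i : Fin n,
      HasDerivAt (fun s => x s i)
        (-((C t * Aᵀ * Γ⁻¹) *ᵥ (A *ᵥ x t - y)) i) t) :
    (∀ t : ℝ, 0 ≤ t → ∀ i : Fin n,
      HasDerivAt (fun s => (specPow S μ α (1 / α) s *ᵥ x s) i)
        (((specPow S μ α (1 / α - 1) t * C₀ * Aᵀ * Γ⁻¹) *ᵥ y) i) t) ∧
    (∀ t : ℝ, 0 ≤ t →
      x t = specPow S μ α (-(1 / α)) t *ᵥ x₀ +
        (specPow S μ α (-(1 / α)) t *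
          Matrix.of (fun i j => ∫ s in (0:ℝ)..t, specPow S μ α (1 / α - 1) s i j) *
          C₀ * Aᵀ * Γ⁻¹) *ᵥ y) := by
  have hα0 : (0:ℝ) < α := lt_of_lt_of_le one_pos hα
  have hαne : α ≠ 0 := ne_of_gt hα0
  have hS1 : S * S⁻¹ = 1 := Matrix.mul_nonsing_inv S hS
  have hS2 : S⁻¹ * S = 1 := Matrix.nonsing_inv_mul S hS
  have hμnn : ∀ i, 0 ≤ μ i := fun i => by
    rcases lt_or_ge (i:ℕ) k with h|h
    · exact (hμpos i h).le
    · exact (hμzero i h).ge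
  have hpos : ∀ t : ℝ, 0 ≤ t → ∀ i, 0 < 1 + α * t * μ i := fun t ht i => by
    have h := mul_nonneg (mul_nonneg hα0.le ht) (hμnn i)
    linarith
  have hC₀u : IsUnit C₀.det := isUnit_iff_ne_zero.mpr hC₀.det_pos.ne'
  have hC₀1 : C₀ * C₀⁻¹ = 1 := Matrix.mul_nonsing_inv C₀ hC₀u
  have hC₀2 : C₀⁻¹ * C₀ = 1 := Matrix.nonsing_inv_mul C₀ hC₀u
  -- diagonalization of C t
  have hCt : ∀ t : ℝ, 0 ≤ t →
      C t = S * Matrix.diagonal (fun i => (1 + α * t * μ i)⁻¹) * S⁻¹ * C₀ := by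
    intro t ht
    set M := S * Matrix.diagonal (fun i => 1 + α * t * μ i) * S⁻¹ with hM
    have hM1 : (1 : Matrix (Fin n) (Fin n) ℝ) + (α * t) • (C₀ * Aᵀ * Γ⁻¹ * A) = M := by
      rw [hdiag, hM]
      have hd : Matrix.diagonal (fun i => 1 + α * t * μ i)
          = 1 + (α * t) • Matrix.diagonal μ := by
        rw [← Matrix.diagonal_one, ← Matrix.diagonal_smul, ← Matrix.diagonal_add]
        rfl
      rw [hd, Matrix.mul_add, Matrix.add_mul, Matrix.mul_one, hS1, Matrix.mul_smul, Matrix.smul_mul]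
    have hMinv : M⁻¹ = S * Matrix.diagonal (fun i => (1 + α * t * μ i)⁻¹) * S⁻¹ := by
      apply Matrix.inv_eq_right_inv
      rw [hM, sandwich_mul hS2]
      have h1 : (fun i => (1 + α * t * μ i) * (1 + α * t * μ i)⁻¹) = fun _ => (1:ℝ) :=
        funext fun i => mul_inv_cancel₀ (hpos t ht i).ne'
      rw [h1, Matrix.diagonal_one, Matrix.mul_one, hS1]
    have hCN : C₀ * (1 + (α * t) • (Aᵀ * Γ⁻¹ * A * C₀)) = M * C₀ := by
      rw [← hM1]
      simp only [Matrix.mul_add, Matrix.add_mul, Matrix.mul_one, Matrix.one_mul,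
        Matrix.mul_smul, Matrix.smul_mul, Matrix.mul_assoc]
    have hN : (1 + (α * t) • (Aᵀ * Γ⁻¹ * A * C₀)) = C₀⁻¹ * (M * C₀) := by
      rw [← hCN, ← Matrix.mul_assoc, hC₀2, Matrix.one_mul]
    rw [hC t, hN, Matrix.mul_inv_rev, Matrix.mul_inv_rev,
      Matrix.nonsing_inv_nonsing_inv C₀ hC₀u, ← Matrix.mul_assoc, ← Matrix.mul_assoc,
      hC₀1, Matrix.one_mul, hMinv]
  -- key algebraic identities
  have key1 : ∀ t : ℝ, 0 ≤ t →
      specPow S μ α (1/α) t * C t = specPow S μ α (1/α - 1) t * C₀ := by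
    intro t ht
    rw [hCt t ht]
    unfold specPow
    rw [← Matrix.mul_assoc, sandwich_mul hS2]
    have h1 : (fun i => (1 + α * t * μ i) ^ ((1/α:ℝ)) * (1 + α * t * μ i)⁻¹)
        = fun i => (1 + α * t * μ i) ^ ((1/α - 1 : ℝ)) := by
      funext i
      rw [Real.rpow_sub (hpos t ht i), Real.rpow_one]
      exact (div_eq_mul_inv _ _).symm
    rw [h1]
  have key2 : ∀ t : ℝ, 0 ≤ t →
      specPow S μ α (1/α) t * C t * Aᵀ * Γ⁻¹ * A
        = S * Matrix.diagonal (fun i => μ i * (1 + α * t * μ i) ^ ((1/α - 1 : ℝ))) * S⁻¹ := by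
    intro t ht
    have h1 : specPow S μ α (1/α) t * C t * Aᵀ * Γ⁻¹ * A
        = specPow S μ α (1/α - 1) t * (C₀ * Aᵀ * Γ⁻¹ * A) := by
      rw [key1 t ht]
      simp only [Matrix.mul_assoc]
    rw [h1, hdiag]
    unfold specPow
    rw [sandwich_mul hS2]
    have h2 : (fun i => (1 + α * t * μ i) ^ ((1/α - 1 : ℝ)) * μ i)
        = fun i => μ i * (1 + α * t * μ i) ^ ((1/α - 1 : ℝ)) := by
      funext i; ring
    rw [h2]
  -- Part 1
  have part1 : ∀ t : ℝ, 0 ≤ t → ∀ i : Fin n,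
      HasDerivAt (fun s => (specPow S μ α (1 / α) s *ᵥ x s) i)
        (((specPow S μ α (1 / α - 1) t * C₀ * Aᵀ * Γ⁻¹) *ᵥ y) i) t := by
    intro t ht i
    set x' : Fin n → ℝ := fun j => -((C t * Aᵀ * Γ⁻¹) *ᵥ (A *ᵥ x t - y)) j with hx'
    have main : HasDerivAt (fun s => (specPow S μ α (1/α) s *ᵥ x s) i)
        (∑ j, ((∑ l, S i l * (μ l * (1 + α * t * μ l) ^ ((1/α - 1 : ℝ))) * S⁻¹ l j) * x t j
          + (∑ l, S i l * (1 + α * t * μ l) ^ ((1/α : ℝ)) * S⁻¹ l j) * x' j)) t := by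
      have heq : (fun s => (specPow S μ α (1/α) s *ᵥ x s) i)
          = fun s => ∑ j, (∑ l, S i l * (1 + α*s*μ l) ^ ((1/α):ℝ) * S⁻¹ l j) * x s j := by
        funext s
        simp [specPow, Matrix.mulVec, dotProduct, sandwich_apply]
      rw [heq]
      apply HasDerivAt.fun_sum
      intro j _
      have h2 : HasDerivAt (fun s => ∑ l, S i l * (1 + α*s*μ l) ^ ((1/α):ℝ) * S⁻¹ l j)
          (∑ l, S i l * (μ l * (1 + α * t * μ l) ^ ((1/α - 1 : ℝ))) * S⁻¹ l j) t := by
        apply HasDerivAt.fun_sum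
        intro l _
        have h1 := ((hasDerivAt_entry (α := α) (t := t) (c := μ l) (p := 1/α)
            (hpos t ht l)).const_mul (S i l)).mul_const (S⁻¹ l j)
        refine h1.congr_deriv ?_
        have hα1 : (1:ℝ) / α * α = 1 := by field_simp
        linear_combination (S i l * (1 + α * t * μ l) ^ ((1/α - 1 : ℝ)) * μ l * S⁻¹ l j) * hα1
      exact h2.mul (hx t ht j)
    set L'' := S * Matrix.diagonal (fun l => μ l * (1 + α * t * μ l) ^ ((1/α - 1 : ℝ))) * S⁻¹
      with hL''
    have hsum : (∑ j, ((∑ l, S i l * (μ l * (1 + α * t * μ l) ^ ((1/α - 1 : ℝ))) * S⁻¹ l j) * x t j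
          + (∑ l, S i l * (1 + α * t * μ l) ^ ((1/α : ℝ)) * S⁻¹ l j) * x' j))
        = (L'' *ᵥ x t + specPow S μ α (1/α) t *ᵥ x') i := by
      simp [hL'', specPow, Matrix.mulVec, dotProduct, sandwich_apply, Finset.sum_add_distrib]
    have hPW : specPow S μ α (1/α) t * (C t * Aᵀ * Γ⁻¹)
        = specPow S μ α (1/α - 1) t * C₀ * Aᵀ * Γ⁻¹ := by
      rw [← Matrix.mul_assoc, ← Matrix.mul_assoc, key1 t ht]
    have hPWA : specPow S μ α (1/α) t * (C t * Aᵀ * Γ⁻¹) * A = L'' := by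
      rw [hL'', ← key2 t ht]
      simp only [Matrix.mul_assoc]
    have hvec : L'' *ᵥ x t + specPow S μ α (1/α) t *ᵥ x'
        = (specPow S μ α (1/α - 1) t * C₀ * Aᵀ * Γ⁻¹) *ᵥ y := by
      have e0 : x' = -((C t * Aᵀ * Γ⁻¹) *ᵥ (A *ᵥ x t - y)) := rfl
      rw [e0, Matrix.mulVec_neg, Matrix.mulVec_mulVec, Matrix.mulVec_sub, Matrix.mulVec_mulVec,
        hPWA, hPW, neg_sub]
      abel
    have hfin := main
    rw [hsum, hvec] at hfin
    exact hfin
  refine ⟨part1, ?_⟩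
  -- Part 2
  have hcontPW : ∀ (p t : ℝ), 0 ≤ t → ∀ i j,
      ContinuousOn (fun s => specPow S μ α p s i j) (Set.Icc 0 t) := by
    intro p t ht i j
    have hfun : (fun s => specPow S μ α p s i j)
        = fun s => ∑ l, S i l * (1 + α*s*μ l) ^ (p:ℝ) * S⁻¹ l j := by
      funext s; simp [specPow, sandwich_apply]
    rw [hfun]
    apply continuousOn_finset_sum
    intro l _
    apply ContinuousOn.mul _ continuousOn_const
    apply ContinuousOn.mul continuousOn_const
    apply ContinuousOn.rpow_const
    · exact (continuous_const.add ((continuous_const.mul continuous_id).mul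
        continuous_const)).continuousOn
    · intro s hs
      exact Or.inl (hpos s hs.1 l).ne'
  intro t ht
  set v : Fin n → ℝ := (C₀ * Aᵀ * Γ⁻¹) *ᵥ y with hv
  have hPCy : ∀ P : Matrix (Fin n) (Fin n) ℝ, (P * C₀ * Aᵀ * Γ⁻¹) *ᵥ y = P *ᵥ v := by
    intro P
    rw [hv]
    simp only [Matrix.mul_assoc, ← Matrix.mulVec_mulVec]
  have hII : ∀ i j, IntervalIntegrable (fun s => specPow S μ α (1/α - 1) s i j)
      MeasureTheory.volume 0 t := by
    intro i j
    apply ContinuousOn.intervalIntegrable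
    rw [Set.uIcc_of_le ht]
    exact hcontPW (1/α - 1) t ht i j
  have ftc : ∀ i, (∫ s in (0:ℝ)..t, ((specPow S μ α (1/α - 1) s * C₀ * Aᵀ * Γ⁻¹) *ᵥ y) i)
      = (specPow S μ α (1/α) t *ᵥ x t) i - x₀ i := by
    intro i
    have h1 := intervalIntegral.integral_eq_sub_of_hasDerivAt (a := (0:ℝ)) (b := t)
      (f := fun s => (specPow S μ α (1/α) s *ᵥ x s) i)
      (f' := fun s => ((specPow S μ α (1/α - 1) s * C₀ * Aᵀ * Γ⁻¹) *ᵥ y) i)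
      (fun s hs => part1 s (by rw [Set.uIcc_of_le ht] at hs; exact hs.1) i)
      (by
        apply ContinuousOn.intervalIntegrable
        rw [Set.uIcc_of_le ht]
        have hfun : (fun s => ((specPow S μ α (1/α - 1) s * C₀ * Aᵀ * Γ⁻¹) *ᵥ y) i)
            = fun s => ∑ j, specPow S μ α (1/α - 1) s i j * v j := by
          funext s
          rw [hPCy]
          rfl
        rw [hfun]
        apply continuousOn_finset_sum
        intro j _
        exact (hcontPW (1/α - 1) t ht i j).mul continuousOn_const)
    rw [h1]
    simp only [specPow_zero hS1, Matrix.one_mulVec, hx0]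
  have hswap : ∀ i, (∫ s in (0:ℝ)..t, ((specPow S μ α (1/α - 1) s * C₀ * Aᵀ * Γ⁻¹) *ᵥ y) i)
      = ∑ j, (∫ s in (0:ℝ)..t, specPow S μ α (1/α - 1) s i j) * v j := by
    intro i
    have h1 : ∀ s : ℝ, ((specPow S μ α (1/α - 1) s * C₀ * Aᵀ * Γ⁻¹) *ᵥ y) i
        = ∑ j, specPow S μ α (1/α - 1) s i j * v j := by
      intro s; rw [hPCy]; rfl
    simp_rw [h1]
    rw [intervalIntegral.integral_finset_sum (fun j _ => (hII i j).mul_const (v j))]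
    simp_rw [intervalIntegral.integral_mul_const]
  have hLx : specPow S μ α (1/α) t *ᵥ x t
      = x₀ + (Matrix.of fun i j => ∫ s in (0:ℝ)..t, specPow S μ α (1/α - 1) s i j) *ᵥ v := by
    funext i
    have h1 := ftc i
    rw [hswap i] at h1
    have h2 : (specPow S μ α (1/α) t *ᵥ x t) i
        = x₀ i + ∑ j, (∫ s in (0:ℝ)..t, specPow S μ α (1/α - 1) s i j) * v j := by
      linarith [h1]
    rw [h2]
    simp [Matrix.mulVec, dotProduct]
  have hinv : specPow S μ α (-(1/α)) t * specPow S μ α (1/α) t = 1 := by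
    rw [specPow_mul_specPow hS2 (hpos t ht)]
    have h0 : -(1/α) + 1/α = 0 := by ring
    rw [h0, specPow_exp_zero hS1]
  calc x t = (1 : Matrix (Fin n) (Fin n) ℝ) *ᵥ x t := (Matrix.one_mulVec _).symm
    _ = (specPow S μ α (-(1/α)) t * specPow S μ α (1/α) t) *ᵥ x t := by rw [hinv]
    _ = specPow S μ α (-(1/α)) t *ᵥ (specPow S μ α (1/α) t *ᵥ x t) := by
        rw [← Matrix.mulVec_mulVec]
    _ = specPow S μ α (-(1/α)) t *ᵥ (x₀ +
          (Matrix.of fun i j => ∫ s in (0:ℝ)..t, specPow S μ α (1/α - 1) s i j) *ᵥ v) := by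
        rw [hLx]
    _ = specPow S μ α (-(1/α)) t *ᵥ x₀ +
        (specPow S μ α (-(1/α)) t *
          Matrix.of (fun i j => ∫ s in (0:ℝ)..t, specPow S μ α (1/α - 1) s i j) *
          C₀ * Aᵀ * Γ⁻¹) *ᵥ y := by
        have hy : specPow S μ α (-(1/α)) t *ᵥ
              ((Matrix.of fun i j => ∫ s in (0:ℝ)..t, specPow S μ α (1/α - 1) s i j) *ᵥ v)
            = (specPow S μ α (-(1/α)) t *
                Matrix.of (fun i j => ∫ s in (0:ℝ)..t, specPow S μ α (1/α - 1) s i j) *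
                C₀ * Aᵀ * Γ⁻¹) *ᵥ y := by
          rw [hv]
          rw [show specPow S μ α (-(1/α)) t *
              Matrix.of (fun i j => ∫ s in (0:ℝ)..t, specPow S μ α (1/α - 1) s i j) *
              C₀ * Aᵀ * Γ⁻¹
            = specPow S μ α (-(1/α)) t *
              (Matrix.of (fun i j => ∫ s in (0:ℝ)..t, specPow S μ α (1/α - 1) s i j) *
                (C₀ * Aᵀ * Γ⁻¹)) from by simp only [Matrix.mul_assoc],
            ← Matrix.mulVec_mulVec, ← Matrix.mulVec_mulVec]
          simp only [Matrix.mulVec_mulVec, Matrix.mul_assoc]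
        rw [Matrix.mulVec_add, hy]
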